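/- Let N ≥ 1 and M ≥ 1 be integers. If each of N edge pairs independently and uniformly at random selects a mini-slot from {1,...,M}, then the probability that exactly one pair selects the minimum selected slot (a successful contention) equals Σ_{k=1}^{M} (N/M) · ((M-k)/M)^{N-1}. -/

import Mathlib

open Finset

def cadsPackFun {N M : ℕ} (i : Fin N) (v : Fin M)
    (g : {j : Fin N // j ≠ i} → {w : Fin M // v < w}) : Fin N → Fin M :=
  fun j => if h : j = i then v else (g ⟨j, h⟩).1

theorem cadsPackFun_min {N M : ℕ} (i : Fin N) (v : Fin M)
    (g : {j : Fin N // j ≠ i} → {w : Fin M // v < w}) :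
    ∀ j : Fin N, j ≠ i → cadsPackFun i v g i < cadsPackFun i v g j := by
  intro j hj
  simpa [cadsPackFun, hj] using (g ⟨j, hj⟩).2

noncomputable def cadsPack (N M : ℕ) :
    (Σ i : Fin N, Σ v : Fin M, ({j : Fin N // j ≠ i} → {w : Fin M // v < w})) →
    {f : Fin N → Fin M // ∃! i : Fin N, ∀ j : Fin N, j ≠ i → f i < f j} :=
  fun ⟨i, v, g⟩ => ⟨cadsPackFun i v g, i, cadsPackFun_min i v g, by
    intro i' hi'
    by_contra hne
    exact lt_asymm (cadsPackFun_min i v g i' hne) (hi' i fun h => hne h.symm)⟩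

theorem cadsPack_bijective (N M : ℕ) : Function.Bijective (cadsPack N M) := by
  classical
  constructor
  · rintro ⟨i, v, g⟩ ⟨i', v', g'⟩ h
    have hf : cadsPackFun i v g = cadsPackFun i' v' g' := congrArg Subtype.val h
    have hii : i = i' := by
      by_contra hne
      have h1 := cadsPackFun_min i v g i' fun h => hne h.symm
      have h2 := cadsPackFun_min i' v' g' i hne
      rw [congrFun hf i, congrFun hf i'] at h1
      exact lt_asymm h1 h2
    subst hii
    have hv : v = v' := by
      have := congrFun hf i
      simpa [cadsPackFun] using this
    subst hv
    have hg : g = g' := by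
      funext j
      have := congrFun hf j.1
      rw [show (j : Fin N) = j.1 from rfl] at this
      simp only [cadsPackFun, dif_neg j.2] at this
      exact Subtype.ext this
    subst hg
    rfl
  · rintro ⟨f, hf⟩
    obtain ⟨i, hi, huniq⟩ := hf
    refine ⟨⟨i, f i, fun j => ⟨f j.1, hi j.1 j.2⟩⟩, ?_⟩
    apply Subtype.ext
    funext j
    by_cases h : j = i
    · subst h; simp [cadsPack, cadsPackFun]
    · simp [cadsPack, cadsPackFun, h]

theorem cads_card (N M : ℕ) :
    Nat.card {f : Fin N → Fin M // ∃! i : Fin N, ∀ j : Fin N, j ≠ i → f i < f j}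
      = ∑ v : Fin M, N * (M - 1 - (v : ℕ)) ^ (N - 1) := by
  classical
  rw [← Nat.card_eq_of_bijective _ (cadsPack_bijective N M)]
  rw [Nat.card_eq_fintype_card, Fintype.card_sigma]
  have hsub : ∀ i : Fin N, Fintype.card {j : Fin N // j ≠ i} = N - 1 := by
    intro i
    simp [Fintype.card_subtype_compl]
  have hval : ∀ v : Fin M, Fintype.card {w : Fin M // v < w} = M - 1 - (v : ℕ) := by
    intro v
    rw [Fintype.card_subtype]
    have h2 : Finset.filter (fun w => v < w) Finset.univ = Finset.Ioi v := by
      ext w; simp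
    rw [h2, Fin.card_Ioi]
  have hterm : ∀ i : Fin N,
      Fintype.card (Σ v : Fin M, ({j : Fin N // j ≠ i} → {w : Fin M // v < w}))
        = ∑ v : Fin M, (M - 1 - (v : ℕ)) ^ (N - 1) := by
    intro i
    rw [Fintype.card_sigma]
    refine Finset.sum_congr rfl fun v _ => ?_
    rw [Fintype.card_fun, hsub, hval]
  calc ∑ i : Fin N, Fintype.card (Σ v : Fin M, ({j : Fin N // j ≠ i} → {w : Fin M // v < w}))
      = ∑ i : Fin N, ∑ v : Fin M, (M - 1 - (v : ℕ)) ^ (N - 1) := by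
        exact Finset.sum_congr rfl fun i _ => hterm i
    _ = ∑ v : Fin M, N * (M - 1 - (v : ℕ)) ^ (N - 1) := by
        rw [Finset.sum_const, Finset.card_univ, Fintype.card_fin]
        rw [smul_eq_mul, Finset.mul_sum]

theorem cads_success_probability (N M : ℕ) (hN : 1 ≤ N) (hM : 1 ≤ M) :
    (Nat.card {f : Fin N → Fin M // ∃! i : Fin N, ∀ j : Fin N, j ≠ i → f i < f j} : ℝ)
      / (M : ℝ) ^ N
    = ∑ k ∈ Finset.Icc 1 M, ((N : ℝ) / M) * (((M : ℝ) - k) / M) ^ (N - 1) := by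
  have hM0 : (M : ℝ) ≠ 0 := by positivity
  rw [cads_card, Fin.sum_univ_eq_sum_range (fun v => N * (M - 1 - v) ^ (N - 1)) M,
      Nat.cast_sum, Finset.sum_div]
  refine Finset.sum_nbij' (i := fun v => v + 1) (j := fun k => k - 1) ?_ ?_ ?_ ?_ ?_
  · intro v hv
    have := Finset.mem_range.mp hv
    simp [Finset.mem_Icc]; omega
  · intro k hk
    have := Finset.mem_Icc.mp hk
    simp [Finset.mem_range]; omega
  · intro v hv; simp
  · intro k hk
    have := Finset.mem_Icc.mp hk
    omega
  · intro v hv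
    have hvM : v < M := Finset.mem_range.mp hv
    have h1 : ((M - 1 - v : ℕ) : ℝ) = (M : ℝ) - 1 - v := by
      have hv1 : v ≤ M - 1 := Nat.le_sub_one_of_lt hvM
      rw [Nat.cast_sub hv1, Nat.cast_sub hM]
      push_cast; ring
    rw [Nat.cast_mul, Nat.cast_pow, h1]
    have hMN : (M : ℝ) ^ N = M * M ^ (N - 1) := by
      conv_lhs => rw [show N = (N - 1) + 1 from (Nat.succ_pred_eq_of_pos hN).symm]
      ring
    rw [hMN, div_pow]
    push_cast
    field_simp
    ring_nf
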